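/- Let f ∈ H and let p_1, …, p_n ∈ E be points whose Gram matrix A_n is positive definite. Then the Aveiro approximation f*_{A_n} satisfies the interpolation property ⟨f*_{A_n}, h(p_j)⟩ = ⟨f, h(p_j)⟩ for every j = 1, …, n; moreover, if g ∈ H satisfies ⟨g, h(p_j)⟩ = ⟨f, h(p_j)⟩ for all j = 1, …, n, then ‖f*_{A_n}‖ ≤ ‖g‖. -/
import Mathlib


open scoped ComplexInnerProductSpace ComplexOrder

/-- **Aveiro Method: interpolation and minimal norm property.**
Let `H` be a complex Hilbert space, `E` a set, `h : E → H`. Given `f ∈ H` and points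
`p 0, …, p (n-1)` whose Gram matrix `A` (with entries `A j k = ⟨h (p k), h (p j)⟩`, written in
Mathlib's convention, conjugate-linear in the first slot, as `⟪h (p j), h (p k)⟫`) is positive
definite, the Aveiro approximation
`f*_A = ∑ j ∑ k ⟨f, h (p j)⟩ ã_{j,k} h (p k)` (with `ã_{j,k}` the entries of the conjugate of
`A⁻¹`) satisfies `⟨f*_A, h (p j)⟩ = ⟨f, h (p j)⟩` for every `j`; moreover if `g` satisfies
`⟨g, h (p j)⟩ = ⟨f, h (p j)⟩` for all `j` then `‖f*_A‖ ≤ ‖g‖`. -/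
theorem stmt0 {H : Type*} [NormedAddCommGroup H] [InnerProductSpace ℂ H] [CompleteSpace H]
    {E : Type*} (h : E → H) (n : ℕ) (p : Fin n → E) (f : H)
    (A : Matrix (Fin n) (Fin n) ℂ)
    (hA : ∀ j k, A j k = ⟪h (p j), h (p k)⟫)
    (hpos : A.PosDef) :
    (∀ j : Fin n,
      ⟪h (p j), ∑ j' : Fin n, ∑ k : Fin n,
          (⟪h (p j'), f⟫ * (starRingEnd ℂ) (A⁻¹ j' k)) • h (p k)⟫ = ⟪h (p j), f⟫) ∧
    (∀ g : H, (∀ j : Fin n, ⟪h (p j), g⟫ = ⟪h (p j), f⟫) →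
      ‖∑ j' : Fin n, ∑ k : Fin n,
          (⟪h (p j'), f⟫ * (starRingEnd ℂ) (A⁻¹ j' k)) • h (p k)‖ ≤ ‖g‖) := by
  set F : H := ∑ j' : Fin n, ∑ k : Fin n,
      (⟪h (p j'), f⟫ * (starRingEnd ℂ) (A⁻¹ j' k)) • h (p k) with hF
  have hHerm := hpos.isHermitian
  have hdet : IsUnit A.det := isUnit_iff_ne_zero.mpr (ne_of_gt hpos.det_pos)
  have hinv : A * A⁻¹ = 1 := Matrix.mul_nonsing_inv A hdet
  have hinvHerm : (A⁻¹).IsHermitian := hHerm.inv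
  have hconj : ∀ j' k, (starRingEnd ℂ) (A⁻¹ j' k) = A⁻¹ k j' := by
    intro j' k
    have := congrFun (congrFun hinvHerm k) j'
    simpa [Matrix.conjTranspose_apply] using this
  have key : ∀ j : Fin n, ⟪h (p j), F⟫ = ⟪h (p j), f⟫ := by
    intro j
    rw [hF]
    simp only [inner_sum, inner_smul_right]
    have : ∀ j' : Fin n, ∑ k : Fin n,
        (⟪h (p j'), f⟫ * (starRingEnd ℂ) (A⁻¹ j' k)) * ⟪h (p j), h (p k)⟫
        = ⟪h (p j'), f⟫ * (A * A⁻¹) j j' := by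
      intro j'
      rw [Matrix.mul_apply, Finset.mul_sum]
      refine Finset.sum_congr rfl fun k _ => ?_
      rw [hconj, ← hA]
      ring
    rw [Finset.sum_congr rfl fun j' _ => this j', hinv]
    simp [Matrix.one_apply, Finset.sum_ite_eq]
  refine ⟨key, fun g hg => ?_⟩
  have horth : ⟪F, g - F⟫ = 0 := by
    rw [hF]
    simp only [sum_inner, inner_smul_left]
    refine Finset.sum_eq_zero fun j' _ => Finset.sum_eq_zero fun k _ => ?_
    have : ⟪h (p k), g - F⟫ = 0 := by
      rw [inner_sub_right, hg k, key k, sub_self]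
    rw [this, mul_zero]
  have hpyth : ‖F + (g - F)‖ * ‖F + (g - F)‖ = ‖F‖ * ‖F‖ + ‖g - F‖ * ‖g - F‖ :=
    norm_add_sq_eq_norm_sq_add_norm_sq_of_inner_eq_zero F (g - F) horth
  have : ‖g‖ * ‖g‖ = ‖F‖ * ‖F‖ + ‖g - F‖ * ‖g - F‖ := by
    rw [← hpyth, add_sub_cancel]
  nlinarith [norm_nonneg (g - F), norm_nonneg F, norm_nonneg g]
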